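/- Let U be a finitely presented group such that the abelianization of U is trivial and such that every finitely presented group embeds into U (i.e., for every finitely presented group P there is an injective group homomorphism P → U). Then there exist a subgroup A ≤ U and an element t ∈ U such that A is isomorphic to U and t⁻¹At is a proper subgroup of A (i.e., t⁻¹At ⊊ A). -/

import Mathlib

/-- A group is finitely presented if it is isomorphic to a presented group on finitely
many generators with finitely many relators. -/
def IsFinitelyPresented (G : Type*) [Group G] : Prop :=
  ∃ (n : ℕ) (rels : Set (FreeGroup (Fin n))),
    rels.Finite ∧ Nonempty (G ≃* PresentedGroup rels)

open Subgroup
open scoped commutatorElement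

lemma isFP_of_fintype_presentation {G : Type} [Group G] {α : Type}
    [Fintype α] (rels : Set (FreeGroup α)) (hfin : rels.Finite)
    (h : Nonempty (G ≃* PresentedGroup rels)) : IsFinitelyPresented G := by
  obtain ⟨e⟩ := h
  exact ⟨Fintype.card α, _, hfin.image _,
    ⟨e.trans (PresentedGroup.equivPresentedGroup rels (Fintype.equivFin α))⟩⟩

lemma freeGroup_fin_one_fp : IsFinitelyPresented (FreeGroup (Fin 1)) := by
  have h : (⊥ : Subgroup (FreeGroup (Fin 1))) =
      Subgroup.normalClosure (∅ : Set (FreeGroup (Fin 1))) :=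
    le_antisymm bot_le (Subgroup.normalClosure_le_normal (Set.empty_subset _))
  exact isFP_of_fintype_presentation (∅ : Set (FreeGroup (Fin 1))) Set.finite_empty
    ⟨(QuotientGroup.quotientBot (G := FreeGroup (Fin 1))).symm.trans
      (QuotientGroup.quotientMulEquivOfEq h)⟩

/-- If `U` is a finitely presented group with trivial abelianization into which every
finitely presented group embeds, then `U` contains a subgroup `A ≅ U` and an element
`t` with `t⁻¹ A t ⊊ A`. -/
theorem exists_subgroup_conjugate_proper (U : Type) [Group U]
    (hfp : IsFinitelyPresented U)
    (htriv : Subsingleton (Abelianization U))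
    (huniv : ∀ (P : Type) [Group P], IsFinitelyPresented P →
      ∃ f : P →* U, Function.Injective f) :
    ∃ (A : Subgroup U) (t : U),
      Nonempty (A ≃* U) ∧
      Subgroup.map (MulAut.conj t⁻¹).toMonoidHom A < A := by
  obtain ⟨n, rels, hrfin, ⟨θ⟩⟩ := hfp
  set u : Fin n → U := fun i => θ.symm (PresentedGroup.of i) with hu
  set f' : FreeGroup (Fin n) →* U := FreeGroup.lift u with hf'
  have hf'of : ∀ i, f' (FreeGroup.of i) = u i := fun i => FreeGroup.lift_apply_of
  have hf'θ : ∀ w, f' w = θ.symm (PresentedGroup.mk rels w) := by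
    have : f' = (θ.symm : PresentedGroup rels →* U).comp (PresentedGroup.mk rels) :=
      FreeGroup.ext_hom _ _ (fun i => by simp [hf'of]; rfl)
    intro w; rw [this]; rfl
  have hf'rels : ∀ r ∈ rels, f' r = 1 := by
    intro r hr
    have : PresentedGroup.mk rels r = 1 :=
      (QuotientGroup.eq_one_iff r).mpr (Subgroup.subset_normalClosure hr)
    rw [hf'θ, this, map_one]
  have hclu : Subgroup.closure (Set.range u) = ⊤ := by
    have h1 : Set.range u = (θ.symm : PresentedGroup rels →* U) ''
        Set.range (PresentedGroup.of (rels := rels)) := by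
      rw [← Set.range_comp]; rfl
    rw [h1, ← MonoidHom.map_closure, PresentedGroup.closure_range_of,
      Subgroup.map_top_of_surjective _ θ.symm.surjective]
  have hf'surj : Function.Surjective f' := by
    rw [← MonoidHom.range_eq_top, hf', FreeGroup.range_lift_eq_closure, hclu]
  -- ## Presentation of U × U
  classical
  set rels₂ : Set (FreeGroup (Fin n ⊕ Fin n)) :=
    (FreeGroup.map Sum.inl '' rels) ∪ (FreeGroup.map Sum.inr '' rels) ∪
      (Set.range fun p : Fin n × Fin n =>
        ⁅(FreeGroup.of (Sum.inl p.1) : FreeGroup (Fin n ⊕ Fin n)),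
          FreeGroup.of (Sum.inr p.2)⁆) with hrels₂
  have hfin₂ : rels₂.Finite :=
    ((hrfin.image _).union (hrfin.image _)).union (Set.finite_range _)
  set v : Fin n ⊕ Fin n → U × U :=
    Sum.elim (fun i => ((u i : U), (1 : U))) (fun i => ((1 : U), u i)) with hv
  have hlift_map : ∀ {β : Type} (g : Fin n → β) {M : Type} [Group M] (vv : β → M)
      (w : FreeGroup (Fin n)),
      FreeGroup.lift vv (FreeGroup.map g w) = FreeGroup.lift (vv ∘ g) w := by
    intro β g M _ vv w
    exact DFunLike.congr_fun
      (FreeGroup.ext_hom ((FreeGroup.lift vv).comp (FreeGroup.map g))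
        (FreeGroup.lift (vv ∘ g)) (by simp)) w
  have hvrels : ∀ r ∈ rels₂, FreeGroup.lift v r = 1 := by
    rintro r ((⟨w, hw, rfl⟩ | ⟨w, hw, rfl⟩) | ⟨⟨i, j⟩, rfl⟩)
    · rw [hlift_map]
      have : (v ∘ Sum.inl) = (MonoidHom.inl U U) ∘ u := rfl
      rw [this]
      have : FreeGroup.lift ((MonoidHom.inl U U) ∘ u) =
          (MonoidHom.inl U U).comp f' := FreeGroup.ext_hom _ _ (by simp [hf'of])
      rw [this, MonoidHom.comp_apply, hf'rels w hw, map_one]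
    · rw [hlift_map]
      have : (v ∘ Sum.inr) = (MonoidHom.inr U U) ∘ u := rfl
      rw [this]
      have : FreeGroup.lift ((MonoidHom.inr U U) ∘ u) =
          (MonoidHom.inr U U).comp f' := FreeGroup.ext_hom _ _ (by simp [hf'of])
      rw [this, MonoidHom.comp_apply, hf'rels w hw, map_one]
    · rw [map_commutatorElement]
      simp only [FreeGroup.lift_apply_of]
      rw [commutatorElement_eq_one_iff_commute]
      show ((u i, 1) : U × U) * (1, u j) = (1, u j) * (u i, 1)
      simp [Prod.ext_iff]
  set φ₁ : PresentedGroup rels₂ →* U × U := PresentedGroup.toGroup hvrels with hφ₁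
  -- homs from the factors
  have hrel₂l : ∀ r ∈ rels,
      FreeGroup.lift (fun i => (PresentedGroup.of (Sum.inl i) : PresentedGroup rels₂)) r = 1 := by
    intro r hr
    have h1 : FreeGroup.lift (fun i => (PresentedGroup.of (Sum.inl i) : PresentedGroup rels₂)) =
        (PresentedGroup.mk rels₂).comp (FreeGroup.map Sum.inl) :=
      FreeGroup.ext_hom _ _ (by intro a; simp; rfl)
    rw [h1, MonoidHom.comp_apply]
    exact (QuotientGroup.eq_one_iff _).mpr (Subgroup.subset_normalClosure
      (Set.mem_union_left _ (Set.mem_union_left _ ⟨r, hr, rfl⟩)))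
  have hrel₂r : ∀ r ∈ rels,
      FreeGroup.lift (fun i => (PresentedGroup.of (Sum.inr i) : PresentedGroup rels₂)) r = 1 := by
    intro r hr
    have h1 : FreeGroup.lift (fun i => (PresentedGroup.of (Sum.inr i) : PresentedGroup rels₂)) =
        (PresentedGroup.mk rels₂).comp (FreeGroup.map Sum.inr) :=
      FreeGroup.ext_hom _ _ (by intro a; simp; rfl)
    rw [h1, MonoidHom.comp_apply]
    exact (QuotientGroup.eq_one_iff _).mpr (Subgroup.subset_normalClosure
      (Set.mem_union_left _ (Set.mem_union_right _ ⟨r, hr, rfl⟩)))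
  set j₁ : U →* PresentedGroup rels₂ :=
    (PresentedGroup.toGroup hrel₂l).comp (θ : U →* PresentedGroup rels) with hj₁
  set j₂ : U →* PresentedGroup rels₂ :=
    (PresentedGroup.toGroup hrel₂r).comp (θ : U →* PresentedGroup rels) with hj₂
  have hj₁u : ∀ i, j₁ (u i) = PresentedGroup.of (Sum.inl i) := by
    intro i
    show PresentedGroup.toGroup hrel₂l (θ (θ.symm (PresentedGroup.of i))) = _
    rw [MulEquiv.apply_symm_apply, PresentedGroup.toGroup.of]
  have hj₂u : ∀ i, j₂ (u i) = PresentedGroup.of (Sum.inr i) := by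
    intro i
    show PresentedGroup.toGroup hrel₂r (θ (θ.symm (PresentedGroup.of i))) = _
    rw [MulEquiv.apply_symm_apply, PresentedGroup.toGroup.of]
  -- generator commutation
  have hc : ∀ i j, Commute (PresentedGroup.of (Sum.inl i) : PresentedGroup rels₂)
      (PresentedGroup.of (Sum.inr j)) := by
    intro i j
    rw [← commutatorElement_eq_one_iff_commute]
    have hmem : ⁅(FreeGroup.of (Sum.inl i) : FreeGroup (Fin n ⊕ Fin n)),
        FreeGroup.of (Sum.inr j)⁆ ∈ rels₂ :=
      Set.mem_union_right _ ⟨(i, j), rfl⟩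
    have h2 : PresentedGroup.mk rels₂
        ⁅FreeGroup.of (Sum.inl i), FreeGroup.of (Sum.inr j)⁆ = 1 :=
      (QuotientGroup.eq_one_iff _).mpr (Subgroup.subset_normalClosure hmem)
    rw [map_commutatorElement] at h2
    exact h2
  -- membership of j₁, j₂ in closures of generator images
  have hmemrange : ∀ (g : Fin n ⊕ Fin n → PresentedGroup rels₂)
      (hg : ∀ r ∈ rels, FreeGroup.lift (fun i => g (Sum.inl i)) r = 1) (a : U),
      True := fun _ _ _ => trivial
  have hj₁mem : ∀ a : U, j₁ a ∈ Subgroup.closure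
      (Set.range fun i => (PresentedGroup.of (Sum.inl i) : PresentedGroup rels₂)) := by
    intro a
    obtain ⟨z, hz⟩ := PresentedGroup.mk_surjective rels (θ a)
    have h1 : j₁ a = FreeGroup.lift
        (fun i => (PresentedGroup.of (Sum.inl i) : PresentedGroup rels₂)) z := by
      have h2 : (PresentedGroup.toGroup hrel₂l).comp (PresentedGroup.mk rels) =
          FreeGroup.lift (fun i => (PresentedGroup.of (Sum.inl i) : PresentedGroup rels₂)) :=
        FreeGroup.ext_hom _ _ (by intro a; simp [PresentedGroup.toGroup.of]; rfl)
      show PresentedGroup.toGroup hrel₂l (θ a) = _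
      rw [← hz, ← MonoidHom.comp_apply, h2]
    rw [h1, ← FreeGroup.range_lift_eq_closure]
    exact ⟨z, rfl⟩
  have hj₂mem : ∀ a : U, j₂ a ∈ Subgroup.closure
      (Set.range fun i => (PresentedGroup.of (Sum.inr i) : PresentedGroup rels₂)) := by
    intro a
    obtain ⟨z, hz⟩ := PresentedGroup.mk_surjective rels (θ a)
    have h1 : j₂ a = FreeGroup.lift
        (fun i => (PresentedGroup.of (Sum.inr i) : PresentedGroup rels₂)) z := by
      have h2 : (PresentedGroup.toGroup hrel₂r).comp (PresentedGroup.mk rels) =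
          FreeGroup.lift (fun i => (PresentedGroup.of (Sum.inr i) : PresentedGroup rels₂)) :=
        FreeGroup.ext_hom _ _ (by intro a; simp [PresentedGroup.toGroup.of]; rfl)
      show PresentedGroup.toGroup hrel₂r (θ a) = _
      rw [← hz, ← MonoidHom.comp_apply, h2]
    rw [h1, ← FreeGroup.range_lift_eq_closure]
    exact ⟨z, rfl⟩
  have hcomm : ∀ (a b : U), Commute (j₁ a) (j₂ b) := by
    intro a b
    have step1 : ∀ i, Subgroup.closure
        (Set.range fun j => (PresentedGroup.of (Sum.inr j) : PresentedGroup rels₂)) ≤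
        Subgroup.centralizer {PresentedGroup.of (Sum.inl i)} := by
      intro i
      rw [Subgroup.closure_le]
      rintro _ ⟨j, rfl⟩
      rw [SetLike.mem_coe, Subgroup.mem_centralizer_iff]
      rintro h rfl
      exact (hc i j).eq
    have hbi : ∀ i, Commute (PresentedGroup.of (Sum.inl i) : PresentedGroup rels₂) (j₂ b) := by
      intro i
      have := Subgroup.mem_centralizer_iff.mp (step1 i (hj₂mem b))
        (PresentedGroup.of (Sum.inl i)) rfl
      exact this
    have step2 : Subgroup.closure
        (Set.range fun i => (PresentedGroup.of (Sum.inl i) : PresentedGroup rels₂)) ≤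
        Subgroup.centralizer {j₂ b} := by
      rw [Subgroup.closure_le]
      rintro _ ⟨i, rfl⟩
      rw [SetLike.mem_coe, Subgroup.mem_centralizer_iff]
      rintro h rfl
      exact (hbi i).symm.eq
    have := Subgroup.mem_centralizer_iff.mp (step2 (hj₁mem a)) (j₂ b) rfl
    exact this.symm
  set φ₂ : U × U →* PresentedGroup rels₂ := j₁.noncommCoprod j₂ hcomm with hφ₂
  have hφ₁j₁ : φ₁.comp j₁ = MonoidHom.inl U U :=
    MonoidHom.eq_of_eqOn_dense hclu (by
      rintro _ ⟨i, rfl⟩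
      show φ₁ (j₁ (u i)) = ((u i, 1) : U × U)
      rw [hj₁u i]
      exact PresentedGroup.toGroup.of hvrels)
  have hφ₁j₂ : φ₁.comp j₂ = MonoidHom.inr U U :=
    MonoidHom.eq_of_eqOn_dense hclu (by
      rintro _ ⟨i, rfl⟩
      show φ₁ (j₂ (u i)) = ((1, u i) : U × U)
      rw [hj₂u i]
      exact PresentedGroup.toGroup.of hvrels)
  have hcomp₁ : φ₁.comp φ₂ = MonoidHom.id (U × U) := by
    refine MonoidHom.ext fun x => ?_
    obtain ⟨a, b⟩ := x
    have hab : φ₂ (a, b) = j₁ a * j₂ b := MonoidHom.noncommCoprod_apply _ _ _ _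
    show φ₁ (φ₂ (a, b)) = (a, b)
    rw [hab, map_mul,
      show φ₁ (j₁ a) = ((a, 1) : U × U) from DFunLike.congr_fun hφ₁j₁ a,
      show φ₁ (j₂ b) = ((1, b) : U × U) from DFunLike.congr_fun hφ₁j₂ b,
      Prod.mk_mul_mk, mul_one, one_mul]
  have hcomp₂ : φ₂.comp φ₁ = MonoidHom.id (PresentedGroup rels₂) := by
    apply PresentedGroup.ext
    rintro (i | j)
    · show φ₂ (φ₁ (PresentedGroup.of (Sum.inl i))) = _
      rw [show φ₁ (PresentedGroup.of (Sum.inl i)) = ((u i, 1) : U × U) from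
        PresentedGroup.toGroup.of hvrels]
      show j₁ (u i) * j₂ 1 = _
      rw [map_one, mul_one, hj₁u i]; rfl
    · show φ₂ (φ₁ (PresentedGroup.of (Sum.inr j))) = _
      rw [show φ₁ (PresentedGroup.of (Sum.inr j)) = ((1, u j) : U × U) from
        PresentedGroup.toGroup.of hvrels]
      show j₁ 1 * j₂ (u j) = _
      rw [map_one, one_mul, hj₂u j]; rfl
  have fp₂ : IsFinitelyPresented (U × U) :=
    isFP_of_fintype_presentation rels₂ hfin₂
      ⟨MonoidHom.toMulEquiv φ₂ φ₁ hcomp₁ hcomp₂⟩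
  -- ## An injective, non-surjective endomorphism of U
  obtain ⟨p, hp⟩ := huniv (U × U) fp₂
  set ψ : U →* U := p.comp (MonoidHom.inl U U) with hψdef
  have hψ : Function.Injective ψ := by
    intro a b h
    have : ((a, 1) : U × U) = (b, 1) := hp h
    exact (Prod.ext_iff.mp this).1
  have hψns : ¬ Function.Surjective ψ := by
    intro hs
    have key : ∀ (b z : U), p (1, b) * z = z * p (1, b) := by
      intro b z
      obtain ⟨a, rfl⟩ := hs z
      have hcom : ((1 : U), b) * ((a : U), (1 : U)) = ((a : U), (1 : U)) * (1, b) := by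
        simp [Prod.ext_iff]
      show p (1, b) * p (a, 1) = p (a, 1) * p (1, b)
      rw [← map_mul, ← map_mul, hcom]
    have hUcomm : ∀ x y : U, x * y = y * x := by
      intro x y
      have h1 : p (1, x) * p (1, y) = p (1, y) * p (1, x) := key x (p (1, y))
      rw [← map_mul, ← map_mul] at h1
      have := hp h1
      simpa [Prod.ext_iff] using this
    have hb : commutator U = ⊥ := by
      rw [_root_.commutator_def, Subgroup.commutator_eq_bot_iff_le_centralizer]
      intro x _
      rw [Subgroup.mem_centralizer_iff]
      intro h _
      exact hUcomm h x
    have hallone : ∀ x : U, x = 1 := by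
      intro x
      have h1 : Abelianization.of x = Abelianization.of 1 := Subsingleton.elim _ _
      rw [map_one] at h1
      have h2 : x ∈ commutator U := (QuotientGroup.eq_one_iff x).mp h1
      rw [hb] at h2
      exact h2
    obtain ⟨q, hq⟩ := huniv (FreeGroup (Fin 1)) freeGroup_fin_one_fp
    have h3 : FreeGroup.of (0 : Fin 1) = 1 := hq (by rw [hallone (q (FreeGroup.of 0)), map_one])
    have := congrArg FreeGroup.toWord h3
    simp [FreeGroup.toWord_of, FreeGroup.toWord_one] at this
  -- ## Presentation of the ascending HNN extension of U along ψ
  set B : Subgroup U := ψ.range with hB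
  set eψ : (⊤ : Subgroup U) ≃* B :=
    Subgroup.topEquiv.trans (MonoidHom.ofInjective hψ) with heψ
  set w : Fin n → FreeGroup (Fin n) := fun i => (hf'surj (ψ (u i))).choose with hwdef
  have hw : ∀ i, f' (w i) = ψ (u i) := fun i => (hf'surj (ψ (u i))).choose_spec
  set rels₃ : Set (FreeGroup (Fin n ⊕ Unit)) :=
    (FreeGroup.map Sum.inl '' rels) ∪
      (Set.range fun i : Fin n =>
        FreeGroup.of (Sum.inr ()) * FreeGroup.of (Sum.inl i) *
          (FreeGroup.of (Sum.inr ()))⁻¹ * (FreeGroup.map Sum.inl (w i))⁻¹) with hrels₃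
  have hfin₃ : rels₃.Finite := (hrfin.image _).union (Set.finite_range _)
  have hrel₃ : ∀ r ∈ rels,
      FreeGroup.lift (fun i => (PresentedGroup.of (Sum.inl i) : PresentedGroup rels₃)) r = 1 := by
    intro r hr
    have h1 : FreeGroup.lift (fun i => (PresentedGroup.of (Sum.inl i) : PresentedGroup rels₃)) =
        (PresentedGroup.mk rels₃).comp (FreeGroup.map Sum.inl) :=
      FreeGroup.ext_hom _ _ (by intro a; simp; rfl)
    rw [h1, MonoidHom.comp_apply]
    exact (QuotientGroup.eq_one_iff _).mpr (Subgroup.subset_normalClosure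
      (Set.mem_union_left _ ⟨r, hr, rfl⟩))
  set j : U →* PresentedGroup rels₃ :=
    (PresentedGroup.toGroup hrel₃).comp (θ : U →* PresentedGroup rels) with hjdef
  set τ : PresentedGroup rels₃ := PresentedGroup.of (Sum.inr ()) with hτ
  have hju : ∀ i, j (u i) = PresentedGroup.of (Sum.inl i) := by
    intro i
    show PresentedGroup.toGroup hrel₃ (θ (θ.symm (PresentedGroup.of i))) = _
    rw [MulEquiv.apply_symm_apply, PresentedGroup.toGroup.of]
  have hjf' : j.comp f' = (PresentedGroup.mk rels₃).comp (FreeGroup.map Sum.inl) :=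
    FreeGroup.ext_hom _ _ (by
      intro i
      show j (f' (FreeGroup.of i)) =
        PresentedGroup.mk rels₃ (FreeGroup.map Sum.inl (FreeGroup.of i))
      rw [hf'of, hju, FreeGroup.map.of]
      rfl)
  have hrelτ : ∀ a : U, τ * j a * τ⁻¹ = j (ψ a) := by
    have hhom : (MulAut.conj τ).toMonoidHom.comp j = j.comp ψ := by
      apply MonoidHom.eq_of_eqOn_dense hclu
      rintro _ ⟨i, rfl⟩
      show MulAut.conj τ (j (u i)) = j (ψ (u i))
      rw [MulAut.conj_apply, hju i]
      have hmem : (FreeGroup.of (Sum.inr ()) * FreeGroup.of (Sum.inl i) *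
          (FreeGroup.of (Sum.inr ()))⁻¹ * (FreeGroup.map Sum.inl (w i))⁻¹ :
          FreeGroup (Fin n ⊕ Unit)) ∈ rels₃ := Set.mem_union_right _ ⟨i, rfl⟩
      have h1 : PresentedGroup.mk rels₃ (FreeGroup.of (Sum.inr ()) * FreeGroup.of (Sum.inl i) *
          (FreeGroup.of (Sum.inr ()))⁻¹ * (FreeGroup.map Sum.inl (w i))⁻¹) = 1 :=
        (QuotientGroup.eq_one_iff _).mpr (Subgroup.subset_normalClosure hmem)
      rw [map_mul, map_mul, map_mul, map_inv, map_inv, mul_inv_eq_one] at h1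
      rw [← hw i, ← MonoidHom.comp_apply, hjf', MonoidHom.comp_apply]
      exact h1
    intro a
    have := DFunLike.congr_fun hhom a
    simpa using this
  set vals : Fin n ⊕ Unit → HNNExtension U ⊤ B eψ :=
    Sum.elim (fun i => HNNExtension.of (u i)) (fun _ => HNNExtension.t) with hvals
  have hoff' : FreeGroup.lift (vals ∘ Sum.inl) =
      (HNNExtension.of : U →* HNNExtension U ⊤ B eψ).comp f' :=
    FreeGroup.ext_hom _ _ (by intro i; simp [hf'of, hvals])
  have hvalsrels : ∀ r ∈ rels₃, FreeGroup.lift vals r = 1 := by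
    rintro r (⟨z, hz, rfl⟩ | ⟨i, rfl⟩)
    · rw [hlift_map, hoff', MonoidHom.comp_apply, hf'rels z hz, map_one]
    · have e1 : FreeGroup.lift vals (FreeGroup.map Sum.inl (w i)) =
          HNNExtension.of (ψ (u i)) := by
        rw [hlift_map, hoff', MonoidHom.comp_apply, hw i]
      have hconj := HNNExtension.equiv_eq_conj (φ := eψ) ⟨u i, Subgroup.mem_top _⟩
      have hcoe : ((eψ ⟨u i, Subgroup.mem_top _⟩ : B) : U) = ψ (u i) := by
        show ((MonoidHom.ofInjective hψ (Subgroup.topEquiv ⟨u i, Subgroup.mem_top _⟩) : B) : U)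
          = ψ (u i)
        rw [MonoidHom.ofInjective_apply]
        rfl
      rw [hcoe] at hconj
      simp only [map_mul, map_inv, e1, FreeGroup.lift_apply_of, hvals, Sum.elim_inl, Sum.elim_inr]
      rw [← hconj]
      rw [← hvals, e1, mul_inv_cancel]
  set Φ : PresentedGroup rels₃ →* HNNExtension U ⊤ B eψ :=
    PresentedGroup.toGroup hvalsrels with hΦdef
  have hΦj : Φ.comp j = (HNNExtension.of : U →* HNNExtension U ⊤ B eψ) :=
    MonoidHom.eq_of_eqOn_dense hclu (by
      rintro _ ⟨i, rfl⟩
      show Φ (j (u i)) = HNNExtension.of (u i)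
      rw [hju i]
      exact PresentedGroup.toGroup.of hvalsrels)
  have hjinj : Function.Injective j := by
    have h1 : Function.Injective (Φ.comp j) := by
      rw [hΦj]; exact HNNExtension.of_injective eψ
    intro a b hab
    exact h1 (by simp only [MonoidHom.comp_apply, hab])
  have fp₃ : IsFinitelyPresented (PresentedGroup rels₃) :=
    isFP_of_fintype_presentation rels₃ hfin₃ ⟨MulEquiv.refl _⟩
  obtain ⟨g, hg⟩ := huniv (PresentedGroup rels₃) fp₃
  set k : U →* U := g.comp j with hkdef
  have hkinj : Function.Injective k := fun a b hab => hjinj (hg hab)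
  refine ⟨k.range, (g τ)⁻¹, ⟨(MonoidHom.ofInjective hkinj).symm⟩, ?_⟩
  rw [inv_inv]
  have hconjk : (MulAut.conj (g τ)).toMonoidHom.comp k = k.comp ψ := by
    refine MonoidHom.ext fun a => ?_
    show g τ * k a * (g τ)⁻¹ = k (ψ a)
    show g τ * g (j a) * (g τ)⁻¹ = g (j (ψ a))
    rw [← map_inv, ← map_mul, ← map_mul, hrelτ a]
  have hmapeq : Subgroup.map (MulAut.conj (g τ)).toMonoidHom k.range =
      Subgroup.map k ψ.range := by
    rw [MonoidHom.map_range, hconjk, MonoidHom.range_comp]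
  rw [hmapeq]
  have h1 : ψ.range < ⊤ := lt_top_iff_ne_top.mpr (fun h => hψns (MonoidHom.range_eq_top.mp h))
  have h2 : Subgroup.map k ψ.range < Subgroup.map k ⊤ :=
    lt_of_le_of_ne (Subgroup.map_mono h1.le)
      (fun h => h1.ne (Subgroup.map_injective hkinj h))
  rwa [← MonoidHom.range_eq_map] at h2
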